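/- Let 0 < |n| < 1 and (α,p) ∈ K_{|n|}. Then the matrix M_{α,p} is positive semidefinite. -/

import Mathlib

open MeasureTheory Set Filter Topology

noncomputable section

/-- The critical exponent `P₋(α) = 1 + (2/n²)(1-α)(α - √(α²-n²))`. -/
def Pminus (n a : ℝ) : ℝ := 1 + (2 / n ^ 2) * (1 - a) * (a - Real.sqrt (a ^ 2 - n ^ 2))

/-- The critical exponent `P₊(α) = 1 + (2/n²)(1-α)(α + √(α²-n²))`. -/
def Pplus (n a : ℝ) : ℝ := 1 + (2 / n ^ 2) * (1 - a) * (a + Real.sqrt (a ^ 2 - n ^ 2))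

/-- The admissible set `K_{|n|}` of pairs `(α,p)`. -/
def Kset (n : ℝ) : Set (ℝ × ℝ) :=
  if n = 0 then {q | 0 < q.1 ∧ q.1 ≤ 1 ∧ 1 ≤ q.1 * q.2}
  else {q | |n| ≤ q.1 ∧ q.1 ≤ 1 ∧ Pminus n q.1 ≤ q.2 ∧ q.2 ≤ Pplus n q.1}

/-- The symmetric matrix `Q_{α,p}(v,u)`, with `γ = n/α`, `Γ = (1-α)/(α(p-1))`,
and the convention `Q_{1,1} = 0`. -/
def Qmat (n a p v u : ℝ) : Matrix (Fin 2) (Fin 2) ℝ :=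
  if a = 1 ∧ p = 1 then 0 else
  (p - 1) • !![v ^ (n / a) * (1 + ((1 - a) / (a * (p - 1))) * (u / v - 1)),
      -(v ^ (n / a) + u ^ (n / a)) / 2;
      -(v ^ (n / a) + u ^ (n / a)) / 2,
      u ^ (n / a) * (1 + ((1 - a) / (a * (p - 1))) * (v / u - 1))]

/-- The symmetric matrix `M_{α,p}`, with `γ = n/α`, `Γ = (1-α)/(α(p-1))`,
and the convention `M_{1,1} = 0`. -/
def Mmat (n a p : ℝ) : Matrix (Fin 2) (Fin 2) ℝ :=
  if a = 1 ∧ p = 1 then 0 else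
  (p - 1) • !![(1 : ℝ), -((1 - a) / (a * (p - 1))) + (n / a) / 2;
      -((1 - a) / (a * (p - 1))) + (n / a) / 2,
      ((1 - a) / (a * (p - 1))) * (1 - n / a)]

lemma aux_key (a d m : ℝ) (ha : 0 < a) (hd : 0 < d)
    (h : 0 ≤ (1 - a) * a * d - (1 - a) ^ 2 - m ^ 2 * d ^ 2 / 4) :
    (m / a) ^ 2 / 4 ≤ (1 - a) / (a * d) - ((1 - a) / (a * d)) ^ 2 := by
  rw [div_pow, div_pow, ← sub_nonneg]
  have heq : (1 - a) / (a * d) - (1 - a) ^ 2 / (a * d) ^ 2 - m ^ 2 / a ^ 2 / 4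
      = ((1 - a) * a * d - (1 - a) ^ 2 - m ^ 2 * d ^ 2 / 4) / (a ^ 2 * d ^ 2) := by
    field_simp
  linarith [heq ▸ div_nonneg h (by positivity : (0:ℝ) ≤ a ^ 2 * d ^ 2)]

lemma aux_psd (c G g : ℝ) (hc : 0 ≤ c) (hkey : g ^ 2 / 4 ≤ G - G ^ 2) :
    (c • !![(1:ℝ), -G + g / 2; -G + g / 2, G * (1 - g)]).PosSemidef := by
  rw [Matrix.posSemidef_iff_dotProduct_mulVec]
  constructor
  · unfold Matrix.IsHermitian
    ext i j
    fin_cases i <;> fin_cases j <;> simp [Matrix.conjTranspose_apply]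
  · intro x
    simp [Matrix.mulVec, dotProduct, Fin.sum_univ_two]
    nlinarith [mul_nonneg hc (sq_nonneg (x 0 + (g/2 - G) * x 1)),
      mul_nonneg hc (mul_nonneg (sub_nonneg.2 hkey) (sq_nonneg (x 1)))]

/-- for `0 < |n| < 1` and `(α,p) ∈ K_{|n|}`, the matrix `M_{α,p}` is
positive semidefinite. -/
theorem Mmat_posSemidef (n α p : ℝ) (hn0 : 0 < |n|) (hn1 : |n| < 1)
    (hK : (α, p) ∈ Kset n) :
    (Mmat n α p).PosSemidef := by
  have hn : n ≠ 0 := fun h => by simp [h] at hn0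
  have hn2 : 0 < n ^ 2 := by positivity
  rw [Kset, if_neg hn] at hK
  obtain ⟨hna, ha1, hpl, hpu⟩ := hK
  simp only at hna ha1 hpl hpu
  have ha0 : 0 < α := lt_of_lt_of_le hn0 hna
  have hsub : (0:ℝ) ≤ α ^ 2 - n ^ 2 := by
    have := sq_abs n
    nlinarith [abs_nonneg n]
  set s := Real.sqrt (α ^ 2 - n ^ 2) with hs
  have hs0 : 0 ≤ s := Real.sqrt_nonneg _
  have hs2 : s ^ 2 = α ^ 2 - n ^ 2 := Real.sq_sqrt hsub
  have hsa : s ≤ α := by nlinarith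
  have hp1 : 1 ≤ p := by
    refine le_trans ?_ hpl
    rw [Pminus]
    nlinarith [mul_nonneg (mul_nonneg (by positivity : (0:ℝ) ≤ 2 / n ^ 2)
      (by linarith : (0:ℝ) ≤ 1 - α)) (by linarith : (0:ℝ) ≤ α - s)]
  by_cases hap : α = 1 ∧ p = 1
  · rw [Mmat, if_pos hap]
    exact Matrix.PosSemidef.zero
  have ha1' : α < 1 := by
    rcases lt_or_eq_of_le ha1 with h | h
    · exact h
    · exfalso
      apply hap
      refine ⟨h, le_antisymm ?_ hp1⟩
      have hP : Pplus n α = 1 := by rw [Pplus, h]; ring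
      rw [hP] at hpu
      exact hpu
  rcases eq_or_lt_of_le hp1 with hp | hp
  · rw [Mmat, if_neg hap, ← hp]
    simp
    exact Matrix.PosSemidef.zero
  have hd : 0 < p - 1 := by linarith
  have hd1 : p - 1 ≥ 2 / n ^ 2 * (1 - α) * (α - s) := by
    have := hpl; rw [Pminus] at this; linarith
  have hd2 : p - 1 ≤ 2 / n ^ 2 * (1 - α) * (α + s) := by
    have := hpu; rw [Pplus] at this; linarith
  have hd1' : 2 * (1 - α) * (α - s) ≤ n ^ 2 * (p - 1) := by
    calc 2 * (1 - α) * (α - s) = n ^ 2 * ((2 / n ^ 2) * (1 - α) * (α - s)) := by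
          field_simp
    _ ≤ n ^ 2 * (p - 1) := by nlinarith [hn2, hd1]
  have hd2' : n ^ 2 * (p - 1) ≤ 2 * (1 - α) * (α + s) := by
    calc n ^ 2 * (p - 1) ≤ n ^ 2 * ((2 / n ^ 2) * (1 - α) * (α + s)) := by
          nlinarith [hn2, hd2]
    _ = 2 * (1 - α) * (α + s) := by field_simp
  have hclear : 0 ≤ (1 - α) * α * (p - 1) - (1 - α) ^ 2 - n ^ 2 * (p - 1) ^ 2 / 4 := by
    have hprod := mul_nonneg (sub_nonneg.2 hd1') (sub_nonneg.2 hd2')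
    have e1 : (n ^ 2 * (p - 1) - 2 * (1 - α) * (α - s)) * (2 * (1 - α) * (α + s) - n ^ 2 * (p - 1))
        = n ^ 2 * (4 * ((1 - α) * α * (p - 1) - (1 - α) ^ 2 - n ^ 2 * (p - 1) ^ 2 / 4)) := by
      linear_combination (4 * (1 - α) ^ 2) * hs2
    rw [e1] at hprod
    nlinarith [hn2, hprod]
  have hkey := aux_key α (p - 1) n ha0 hd hclear
  rw [Mmat, if_neg hap]
  exact aux_psd (p - 1) ((1 - α) / (α * (p - 1))) (n / α) hd.le hkey
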